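/- arXiv:2108.07078 — 4 statements merged into one kernel-verified Lean document; each statement's English description precedes it below -/
import Mathlib

section
/- Let n ≥ 2 and let m_1, m_2 ∈ {0, …, ⌊n/2⌋}. Then the minimum of |D_1(θ,η)| + |D_2(θ,η)| over all θ ∈ {0,1}^n with Σ_i θ_i = m_1 and all η ∈ {0,1}^n with Σ_i η_i = m_2 equals |m_1 − m_2|·(n − |m_1 − m_2|). -/
open Finset Real Filter

/-- The set of potential edges of an `n`-vertex graph: pairs `(i,j)` with `i < j`. -/
abbrev Edge (n : ℕ) := {e : Fin n × Fin n // e.1 < e.2}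

/-- An observed graph: an edge indicator for each potential edge. -/
abbrev ObsGraph (n : ℕ) := Edge n → Bool

/-- Edge probability under assignment `θ`: `p` within communities, `q` between. -/
noncomputable def edgeProb {n : ℕ} (p q : ℝ) (θ : Fin n → Bool) (e : Edge n) : ℝ :=
  if θ e.val.1 = θ e.val.2 then p else q

/-- Probability mass function of the observed graph under `θ`. -/
noncomputable def graphPMF {n : ℕ} (p q : ℝ) (θ : Fin n → Bool) (x : ObsGraph n) : ℝ :=
  ∏ e : Edge n, if x e then edgeProb p q θ e else 1 - edgeProb p q θ e

/-- Hellinger affinity of Bernoulli parameters. -/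
noncomputable def rho (p q : ℝ) : ℝ := Real.sqrt (p * q) + Real.sqrt ((1 - p) * (1 - q))

/-- Edges whose probability changes from `p` to `q` when replacing `θ` by `η`. -/
def D1 {n : ℕ} (θ η : Fin n → Bool) : Finset (Fin n × Fin n) :=
  Finset.univ.filter fun e => e.1 < e.2 ∧ θ e.1 = θ e.2 ∧ η e.1 ≠ η e.2

/-- Edges whose probability changes from `q` to `p` when replacing `θ` by `η`. -/
def D2 {n : ℕ} (θ η : Fin n → Bool) : Finset (Fin n × Fin n) :=
  Finset.univ.filter fun e => e.1 < e.2 ∧ θ e.1 ≠ θ e.2 ∧ η e.1 = η e.2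

/-- Hamming distance. -/
def hdist {n : ℕ} (θ η : Fin n → Bool) : ℕ := (Finset.univ.filter fun i => θ i ≠ η i).card

/-- The metric `k(θ,η) = h(θ,η) ∧ (n - h(θ,η))`. -/
def kdist {n : ℕ} (θ η : Fin n → Bool) : ℕ := min (hdist θ η) (n - hdist θ η)

/-- Size of the smallest community. -/
def countOnes {n : ℕ} (θ : Fin n → Bool) : ℕ := (Finset.univ.filter fun i => θ i = true).card

/-- The parameter space `Θ_n`. -/
def Theta (n : ℕ) : Finset (Fin n → Bool) :=
  Finset.univ.filter fun θ => 2 * countOnes θ ≤ n ∧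
    ∀ i : Fin n, 2 * countOnes θ = n → (i : ℕ) = 0 → θ i = false

/-- Posterior mass of `A ⊆ Θ_n` given data `x`, under prior mass function `π`. -/
noncomputable def postMass {n : ℕ} (p q : ℝ) (pri : (Fin n → Bool) → ℝ)
    (A : Finset (Fin n → Bool)) (x : ObsGraph n) : ℝ :=
  (∑ η ∈ A, pri η * graphPMF p q η x) / (∑ η ∈ Theta n, pri η * graphPMF p q η x)

/-- `P_θ`-expectation of the posterior mass of `A`. -/
noncomputable def expPostMass {n : ℕ} (p q : ℝ) (pri : (Fin n → Bool) → ℝ)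
    (θ : Fin n → Bool) (A : Finset (Fin n → Bool)) : ℝ :=
  ∑ x : ObsGraph n, graphPMF p q θ x * postMass p q pri A x

/-- The uniform prior on `Θ_n`. -/
noncomputable def unifPrior (n : ℕ) : (Fin n → Bool) → ℝ := fun _ => ((2:ℝ) ^ (n - 1))⁻¹

/-- Hamming ball `B_n(θ,k)` inside `Θ_n`. -/
def hball {n : ℕ} (θ : Fin n → Bool) (k : ℕ) : Finset (Fin n → Bool) :=
  (Theta n).filter fun η => kdist η θ ≤ k

lemma double_count {n : ℕ} (Q : Fin n × Fin n → Prop) [DecidablePred Q]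
    (hsymm : ∀ i j, Q (i, j) ↔ Q (j, i)) (hirr : ∀ i, ¬ Q (i, i)) :
    2 * (univ.filter fun e : Fin n × Fin n => e.1 < e.2 ∧ Q e).card = (univ.filter Q).card := by
  have hsplit : (univ.filter Q) =
      (univ.filter fun e : Fin n × Fin n => e.1 < e.2 ∧ Q e) ∪
      (univ.filter fun e : Fin n × Fin n => e.2 < e.1 ∧ Q e) := by
    ext ⟨i, j⟩
    simp only [mem_filter, mem_union, mem_univ, true_and]
    rcases lt_trichotomy i j with h | h | h
    · tauto
    · subst h; exact ⟨fun hq => absurd hq (hirr i), by tauto⟩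
    · tauto
  have hdisj : Disjoint (univ.filter fun e : Fin n × Fin n => e.1 < e.2 ∧ Q e)
      (univ.filter fun e : Fin n × Fin n => e.2 < e.1 ∧ Q e) := by
    rw [Finset.disjoint_left]
    intro e h1 h2
    simp only [mem_filter] at h1 h2
    exact absurd h2.2.1 (lt_asymm h1.2.1)
  have hcard : (univ.filter fun e : Fin n × Fin n => e.2 < e.1 ∧ Q e).card =
      (univ.filter fun e : Fin n × Fin n => e.1 < e.2 ∧ Q e).card := by
    apply Finset.card_bij' (fun e _ => Prod.swap e) (fun e _ => Prod.swap e)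
    · intro e he; simp only [mem_filter, mem_univ, true_and] at he ⊢
      exact ⟨he.1, (hsymm e.2 e.1).mpr (by simpa using he.2)⟩
    · intro e he; simp only [mem_filter, mem_univ, true_and] at he ⊢
      exact ⟨he.1, (hsymm e.1 e.2).mp (by simpa using he.2)⟩
    · intro e _; simp
    · intro e _; simp
  rw [hsplit, Finset.card_union_of_disjoint hdisj, hcard]
  ring

lemma key_formula {n : ℕ} (θ η : Fin n → Bool) :
    (D1 θ η).card + (D2 θ η).card = hdist θ η * (n - hdist θ η) := by
  classical
  set S : Finset (Fin n) := univ.filter (fun i => θ i ≠ η i) with hS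
  set Q : Fin n × Fin n → Prop := fun e => ¬ ((θ e.1 == η e.1) = (θ e.2 == η e.2)) with hQ
  have hsymm : ∀ i j, Q (i, j) ↔ Q (j, i) := by intro i j; simp [hQ]; tauto
  have hirr : ∀ i, ¬ Q (i, i) := by intro i; simp [hQ]
  have hunion : (univ.filter fun e : Fin n × Fin n => e.1 < e.2 ∧ Q e) = D1 θ η ∪ D2 θ η := by
    ext ⟨i, j⟩
    simp only [D1, D2, mem_filter, mem_union, mem_univ, true_and, hQ]
    have : (¬ ((θ i == η i) = (θ j == η j))) ↔
        ((θ i = θ j ∧ η i ≠ η j) ∨ (θ i ≠ θ j ∧ η i = η j)) := by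
      cases hθi : θ i <;> cases hθj : θ j <;> cases hηi : η i <;> cases hηj : η j <;> simp
    tauto
  have hdisj : Disjoint (D1 θ η) (D2 θ η) := by
    rw [Finset.disjoint_left]
    intro e h1 h2
    simp only [D1, D2, mem_filter] at h1 h2
    exact h2.2.2.1 h1.2.2.1
  have hQfilter : (univ.filter Q) = S ×ˢ Sᶜ ∪ Sᶜ ×ˢ S := by
    ext ⟨i, j⟩
    simp only [hQ, hS, mem_filter, mem_union, Finset.mem_product, Finset.mem_compl,
      mem_univ, true_and]
    cases hθi : θ i <;> cases hθj : θ j <;> cases hηi : η i <;> cases hηj : η j <;> simp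
  have hdisj2 : Disjoint (S ×ˢ Sᶜ) (Sᶜ ×ˢ S) := by
    rw [Finset.disjoint_left]
    intro e h1 h2
    rw [Finset.mem_product] at h1 h2
    exact (Finset.mem_compl.mp h2.1) h1.1
  have hScard : S.card = hdist θ η := rfl
  have hcompl : Sᶜ.card = n - S.card := by
    rw [Finset.card_compl, Fintype.card_fin]
  have := double_count Q hsymm hirr
  rw [hunion, Finset.card_union_of_disjoint hdisj, hQfilter,
    Finset.card_union_of_disjoint hdisj2, Finset.card_product, Finset.card_product,
    hcompl, hScard] at this
  rw [Nat.mul_comm (n - hdist θ η)] at this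
  omega

lemma hdist_bounds {n : ℕ} (θ η : Fin n → Bool) :
    Nat.dist (countOnes θ) (countOnes η) ≤ hdist θ η ∧
      hdist θ η ≤ countOnes θ + countOnes η := by
  classical
  set A : Finset (Fin n) := univ.filter (fun i => θ i = true) with hA
  set B : Finset (Fin n) := univ.filter (fun i => η i = true) with hB
  have hsplit : (univ.filter fun i => θ i ≠ η i) = (A \ B) ∪ (B \ A) := by
    ext i
    simp only [hA, hB, mem_filter, mem_union, Finset.mem_sdiff, mem_univ, true_and]
    cases θ i <;> cases η i <;> simp
  have hdisj : Disjoint (A \ B) (B \ A) :=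
    disjoint_sdiff_sdiff
  have h1 : hdist θ η = (A \ B).card + (B \ A).card := by
    rw [hdist, hsplit, Finset.card_union_of_disjoint hdisj]
  have h2 : A.card ≤ (A \ B).card + B.card := by
    calc A.card ≤ ((A \ B) ∪ B).card := Finset.card_le_card (by
      intro x hx
      simp only [mem_union, Finset.mem_sdiff]
      by_cases h : x ∈ B <;> tauto)
    _ ≤ (A \ B).card + B.card := Finset.card_union_le _ _
  have h3 : B.card ≤ (B \ A).card + A.card := by
    calc B.card ≤ ((B \ A) ∪ A).card := Finset.card_le_card (by
      intro x hx
      simp only [mem_union, Finset.mem_sdiff]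
      by_cases h : x ∈ A <;> tauto)
    _ ≤ (B \ A).card + A.card := Finset.card_union_le _ _
  have h4 : (A \ B).card ≤ A.card := Finset.card_le_card (Finset.sdiff_subset)
  have h5 : (B \ A).card ≤ B.card := Finset.card_le_card (Finset.sdiff_subset)
  have hcA : countOnes θ = A.card := rfl
  have hcB : countOnes η = B.card := rfl
  rw [hcA, hcB, Nat.dist]
  omega

lemma arith_min (n s t : ℕ) (hts : t ≤ s) (hsn : s + t ≤ n) :
    t * (n - t) ≤ s * (n - s) := by
  have h1 : n - t = (n - s) + (s - t) := by omega
  have h2 : s = t + (s - t) := by omega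
  have h3 : t ≤ n - s := by omega
  calc t * (n - t) = t * (n - s) + t * (s - t) := by rw [h1, Nat.mul_add]
    _ ≤ t * (n - s) + (n - s) * (s - t) :=
        Nat.add_le_add_left (Nat.mul_le_mul_right _ h3) _
    _ = (t + (s - t)) * (n - s) := by ring
    _ = s * (n - s) := by rw [← h2]

lemma count_lt {n m : ℕ} (hm : m ≤ n) :
    (univ.filter fun i : Fin n => (i : ℕ) < m).card = m := by
  rcases Nat.eq_or_lt_of_le hm with h | h
  · subst h
    rw [Finset.filter_true_of_mem (fun i _ => i.isLt), Finset.card_univ, Fintype.card_fin]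
  · have : (univ.filter fun i : Fin n => (i : ℕ) < m) = Finset.Iio (⟨m, h⟩ : Fin n) := by
      ext i; simp [Fin.lt_def]
    rw [this, Fin.card_Iio]

lemma count_between {n a b : ℕ} (hab : a ≤ b) (hb : b ≤ n) :
    (univ.filter fun i : Fin n => a ≤ (i : ℕ) ∧ (i : ℕ) < b).card = b - a := by
  rcases Nat.eq_or_lt_of_le hb with h | h
  · have h1 : (univ.filter fun i : Fin n => a ≤ (i : ℕ) ∧ (i : ℕ) < b) =
        (univ.filter fun i : Fin n => a ≤ (i : ℕ)) := by
      ext i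
      simp only [mem_filter, mem_univ, true_and, and_iff_left_iff_imp]
      intro _
      have := i.isLt
      omega
    have h2 : (univ.filter fun i : Fin n => a ≤ (i : ℕ)) =
        (univ.filter fun i : Fin n => (i : ℕ) < a)ᶜ := by
      ext i; simp
    rw [h1, h2, Finset.card_compl, count_lt (hab.trans hb), Fintype.card_fin, h]
  · have hb' : b < n := h
    have ha' : a < n := lt_of_le_of_lt hab h
    have : (univ.filter fun i : Fin n => a ≤ (i : ℕ) ∧ (i : ℕ) < b) =
        Finset.Ico (⟨a, ha'⟩ : Fin n) ⟨b, hb'⟩ := by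
      ext i; simp [Fin.lt_def, Fin.le_def]
    rw [this, Fin.card_Ico]

/-- the minimum of `|D_1(θ,η)| + |D_2(θ,η)|` over `θ` with `m_1` ones and
`η` with `m_2` ones equals `|m_1 − m_2|·(n − |m_1 − m_2|)`. -/
theorem stmt1 (n : ℕ) (hn : 2 ≤ n) (m1 m2 : ℕ) (hm1 : m1 ≤ n / 2) (hm2 : m2 ≤ n / 2) :
    IsLeast {d : ℕ | ∃ θ η : Fin n → Bool, countOnes θ = m1 ∧ countOnes η = m2 ∧
        d = (D1 θ η).card + (D2 θ η).card}
      (Nat.dist m1 m2 * (n - Nat.dist m1 m2)) := by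
  constructor
  · -- membership
    refine ⟨fun i => decide ((i : ℕ) < m1), fun i => decide ((i : ℕ) < m2), ?_, ?_, ?_⟩
    · have : (univ.filter fun i : Fin n => (decide ((i : ℕ) < m1)) = true) =
          (univ.filter fun i : Fin n => (i : ℕ) < m1) := by
        ext i; simp
      rw [countOnes, this, count_lt (by omega)]
    · have : (univ.filter fun i : Fin n => (decide ((i : ℕ) < m2)) = true) =
          (univ.filter fun i : Fin n => (i : ℕ) < m2) := by
        ext i; simp
      rw [countOnes, this, count_lt (by omega)]
    · rw [key_formula]
      have hd : Nat.dist m1 m2 = m1 - m2 + (m2 - m1) := rfl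
      have hh : hdist (fun i : Fin n => decide ((i : ℕ) < m1))
          (fun i : Fin n => decide ((i : ℕ) < m2)) = Nat.dist m1 m2 := by
        have h1 : (univ.filter fun i : Fin n =>
            (decide ((i : ℕ) < m1)) ≠ (decide ((i : ℕ) < m2))) =
            (univ.filter fun i : Fin n =>
              min m1 m2 ≤ (i : ℕ) ∧ (i : ℕ) < max m1 m2) := by
          ext i
          simp only [mem_filter, mem_univ, true_and, ne_eq, decide_eq_decide]
          omega
        rw [hdist, h1, count_between (by omega) (by omega)]
        omega
      rw [hh]
  · -- lower bound
    rintro d ⟨θ, η, h1, h2, h3⟩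
    obtain ⟨hb1, hb2⟩ := hdist_bounds θ η
    rw [h1, h2] at hb1 hb2
    rw [h3, key_formula]
    have hd : Nat.dist m1 m2 = m1 - m2 + (m2 - m1) := rfl
    exact arith_min n (hdist θ η) (Nat.dist m1 m2) hb1 (by omega)
end

section
/- Let n ≥ 2, θ, η ∈ {0,1}^n, and let m_θ = Σ_i θ_i, m_η = Σ_i η_i with m_θ, m_η ≤ ⌊n/2⌋. Then |D_1(θ,η) ∪ D_2(θ,η)| ≥ |m_θ − m_η|·(n − |m_θ − m_η|). -/
open Finset Real Filter

section Stmt2Aux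
open Finset
variable {n : ℕ}

private lemma stmt2_aux_key (a b c e : ℕ) (hcb : c ≤ b) (h1 : 2*(a+b) ≤ a+b+c+e) :
    Nat.dist b c * (a+b+c+e - Nat.dist b c) ≤ (a+e)*(b+c) := by
  obtain ⟨s, rfl⟩ := Nat.exists_eq_add_of_le hcb
  have hdist : Nat.dist (c+s) c = s := by simp [Nat.dist]
  rw [hdist]
  have hs : s ≤ a + e := by omega
  have hsub : a+(c+s)+c+e - s = a+e+2*c := by omega
  rw [hsub]
  calc s*(a+e+2*c) = (a+e)*s + 2*c*s := by ring
    _ ≤ (a+e)*s + 2*c*(a+e) := by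
        exact Nat.add_le_add_left (Nat.mul_le_mul_left _ hs) _
    _ = (a+e)*((c+s)+c) := by ring

private lemma stmt2_aux_arith (a b c e : ℕ) (h1 : 2*(a+b) ≤ a+b+c+e) (h2 : 2*(a+c) ≤ a+b+c+e) :
    Nat.dist (a+b) (a+c) * ((a+b+c+e) - Nat.dist (a+b) (a+c)) ≤ (a+e)*(b+c) := by
  have hd : Nat.dist (a+b) (a+c) = Nat.dist b c := by simp [Nat.dist]; omega
  rw [hd]
  rcases le_total c b with h | h
  · exact stmt2_aux_key a b c e h h1
  · have := stmt2_aux_key a c b e h (by omega)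
    rw [Nat.dist_comm] at this
    calc Nat.dist b c * (a+b+c+e - Nat.dist b c)
        = Nat.dist b c * (a+c+b+e - Nat.dist b c) := by ring_nf
      _ ≤ (a+e)*(c+b) := this
      _ = (a+e)*(b+c) := by ring

/-- The ordered version of `D1 ∪ D2`. -/
private def Ford (θ η : Fin n → Bool) : Finset (Fin n × Fin n) :=
  Finset.univ.filter fun e => ((θ e.1 == θ e.2) ≠ (η e.1 == η e.2))

private lemma ford_symm (θ η : Fin n → Bool) (i j : Fin n) :
    ((θ j == θ i) ≠ (η j == η i)) ↔ ((θ i == θ j) ≠ (η i == η j)) := by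
  rw [Bool.beq_comm (a := θ j), Bool.beq_comm (a := η j)]

private lemma ford_card (θ η : Fin n → Bool) :
    (Ford θ η).card = 2 * (D1 θ η ∪ D2 θ η).card := by
  have hU : D1 θ η ∪ D2 θ η = (Ford θ η).filter fun e => e.1 < e.2 := by
    ext ⟨i, j⟩
    simp only [D1, D2, Ford, mem_union, mem_filter, mem_univ, true_and, filter_filter]
    cases h1 : θ i <;> cases h2 : θ j <;> cases h3 : η i <;> cases h4 : η j <;> simp
  have hswap : ((Ford θ η).filter fun e => ¬ e.1 < e.2).card
      = ((Ford θ η).filter fun e => e.1 < e.2).card := by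
    apply Finset.card_bij (fun e _ => Prod.swap e)
    · rintro ⟨i, j⟩ h
      simp only [Ford, mem_filter, mem_univ, true_and, Prod.swap_prod_mk] at h ⊢
      obtain ⟨h1, h2⟩ := h
      have hne : i ≠ j := by rintro rfl; simp at h1
      exact ⟨(ford_symm θ η i j).mpr h1, (not_lt.mp h2).lt_of_ne hne.symm⟩
    · rintro ⟨i, j⟩ _ ⟨i', j'⟩ _ h
      simpa [Prod.ext_iff, and_comm] using h
    · rintro ⟨i, j⟩ h
      refine ⟨(j, i), ?_, rfl⟩
      simp only [Ford, mem_filter, mem_univ, true_and] at h ⊢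
      obtain ⟨h1, h2⟩ := h
      exact ⟨(ford_symm θ η i j).mpr h1, not_lt.mpr h2.le⟩
  rw [hU, two_mul]
  conv_lhs => rw [← Finset.card_filter_add_card_filter_not
    (s := Ford θ η) (p := fun e => e.1 < e.2)]
  omega

/-- The four classes. -/
private def Aset (θ η : Fin n → Bool) (p : Bool × Bool) : Finset (Fin n) :=
  Finset.univ.filter fun i => (θ i, η i) = p

private lemma row_card (θ η : Fin n → Bool) (i : Fin n) :
    ((univ : Finset (Fin n)).filter fun j => ((θ i == θ j) ≠ (η i == η j))).card
      = (Aset θ η (θ i, !η i)).card + (Aset θ η (!θ i, η i)).card := by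
  rw [← Finset.card_union_of_disjoint]
  · congr 1
    ext j
    simp only [Aset, mem_union, mem_filter, mem_univ, true_and, Prod.mk.injEq]
    cases h1 : θ i <;> cases h2 : θ j <;> cases h3 : η i <;> cases h4 : η j <;> simp
  · rw [Finset.disjoint_left]
    intro j hj hj'
    simp only [Aset, mem_filter, mem_univ, true_and, Prod.mk.injEq] at hj hj'
    cases θ i <;> simp_all

private lemma ford_card_eq (θ η : Fin n → Bool) :
    (Ford θ η).card = ∑ i : Fin n,
      ((Aset θ η (θ i, !η i)).card + (Aset θ η (!θ i, η i)).card) := by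
  rw [Finset.card_eq_sum_card_fiberwise (f := Prod.fst) (t := univ) (fun _ _ => mem_univ _)]
  refine Finset.sum_congr rfl fun i _ => ?_
  rw [← row_card]
  apply Finset.card_bij (fun e _ => e.2)
  · rintro ⟨i', j⟩ h
    simp only [Ford, mem_filter, mem_univ, true_and] at h ⊢
    obtain ⟨h1, rfl⟩ := h
    exact h1
  · rintro ⟨i1, j1⟩ h1 ⟨i2, j2⟩ h2 h
    simp only [Ford, mem_filter] at h1 h2
    simp_all [Prod.ext_iff]
  · intro j hj
    simp only [mem_filter, mem_univ, true_and] at hj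
    exact ⟨(i, j), by simpa [Ford] using hj, rfl⟩

private lemma sum_classes (θ η : Fin n → Bool) (g : Bool × Bool → ℕ) :
    ∑ i : Fin n, g (θ i, η i) = ∑ p : Bool × Bool, (Aset θ η p).card * g p := by
  rw [← Finset.sum_fiberwise univ (fun i => (θ i, η i)) (fun i => g (θ i, η i))]
  refine Finset.sum_congr rfl fun p _ => ?_
  rw [Finset.sum_congr rfl (fun i hi => by
    simp only [mem_filter] at hi; rw [hi.2]), Finset.sum_const, smul_eq_mul]
  rfl

private lemma union_card_eq (θ η : Fin n → Bool) :
    2 * (D1 θ η ∪ D2 θ η).card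
      = 2 * (((Aset θ η (true, true)).card + (Aset θ η (false, false)).card)
          * ((Aset θ η (true, false)).card + (Aset θ η (false, true)).card)) := by
  rw [← ford_card, ford_card_eq]
  have := sum_classes θ η (fun p => (Aset θ η (p.1, !p.2)).card + (Aset θ η (!p.1, p.2)).card)
  rw [this]
  rw [Fintype.sum_prod_type]
  simp only [Fintype.sum_bool, Bool.not_true, Bool.not_false]
  ring

private lemma countOnes_eq (θ η : Fin n → Bool) :
    countOnes θ = (Aset θ η (true, true)).card + (Aset θ η (true, false)).card := by
  rw [← Finset.card_union_of_disjoint]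
  · unfold countOnes
    congr 1
    ext i
    simp only [Aset, mem_union, mem_filter, mem_univ, true_and, Prod.mk.injEq]
    cases η i <;> simp
  · rw [Finset.disjoint_left]
    intro j hj hj'
    simp only [Aset, mem_filter, mem_univ, true_and, Prod.mk.injEq] at hj hj'
    simp_all

private lemma countOnes_eq' (θ η : Fin n → Bool) :
    countOnes η = (Aset θ η (true, true)).card + (Aset θ η (false, true)).card := by
  rw [← Finset.card_union_of_disjoint]
  · unfold countOnes
    congr 1
    ext i
    simp only [Aset, mem_union, mem_filter, mem_univ, true_and, Prod.mk.injEq]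
    cases θ i <;> simp
  · rw [Finset.disjoint_left]
    intro j hj hj'
    simp only [Aset, mem_filter, mem_univ, true_and, Prod.mk.injEq] at hj hj'
    simp_all

private lemma total_eq (θ η : Fin n → Bool) :
    n = (Aset θ η (true, true)).card + (Aset θ η (true, false)).card
      + (Aset θ η (false, true)).card + (Aset θ η (false, false)).card := by
  have := sum_classes θ η (fun _ => 1)
  simp only [Finset.sum_const, smul_eq_mul, mul_one, card_univ, Fintype.card_fin,
    Fintype.sum_prod_type, Fintype.sum_bool] at this
  omega

end Stmt2Aux

/-- `|D_1(θ,η) ∪ D_2(θ,η)| ≥ |m_θ − m_η|·(n − |m_θ − m_η|)`. -/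
theorem stmt2 (n : ℕ) (hn : 2 ≤ n) (θ η : Fin n → Bool)
    (hmθ : countOnes θ ≤ n / 2) (hmη : countOnes η ≤ n / 2) :
    Nat.dist (countOnes θ) (countOnes η) * (n - Nat.dist (countOnes θ) (countOnes η))
      ≤ (D1 θ η ∪ D2 θ η).card := by
  classical
  set a := (Aset θ η (true, true)).card with ha
  set b := (Aset θ η (true, false)).card with hb
  set c := (Aset θ η (false, true)).card with hc
  set e := (Aset θ η (false, false)).card with he
  have hn4 : n = a + b + c + e := total_eq θ η
  have hθ : countOnes θ = a + b := countOnes_eq θ η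
  have hη : countOnes η = a + c := countOnes_eq' θ η
  have h1 : 2*(a+b) ≤ a+b+c+e := by omega
  have h2 : 2*(a+c) ≤ a+b+c+e := by omega
  have hcard : (D1 θ η ∪ D2 θ η).card = (a+e)*(b+c) := by
    have h3 := union_card_eq θ η
    simp only [← ha, ← hb, ← hc, ← he] at h3
    omega
  rw [hθ, hη, hcard]
  calc Nat.dist (a+b) (a+c) * (n - Nat.dist (a+b) (a+c))
      = Nat.dist (a+b) (a+c) * ((a+b+c+e) - Nat.dist (a+b) (a+c)) := by rw [← hn4]
    _ ≤ (a+e)*(b+c) := stmt2_aux_arith a b c e h1 h2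
end

section
/- Let n ≥ 2, p, q ∈ (0,1), θ, η ∈ {0,1}^n, and let w_θ, w_η > 0 be weights. Then there exists a test function φ : 𝒳_n → [0,1] such that w_θ · P_θ φ(X^n) + w_η · P_η(1 − φ(X^n)) ≤ (w_θ)^{1/2}(w_η)^{1/2} · ρ(p,q)^{|D_1(θ,η)| + |D_2(θ,η)|}, where P_θ φ(X^n) denotes the expectation Σ_{x∈𝒳_n} p_θ(x) φ(x). -/
open Finset Real Filter

lemma sqrt_finset_prod {ι : Type*} (s : Finset ι) (f : ι → ℝ) (h : ∀ i ∈ s, 0 ≤ f i) :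
    Real.sqrt (∏ i ∈ s, f i) = ∏ i ∈ s, Real.sqrt (f i) := by
  induction s using Finset.cons_induction with
  | empty => simp
  | cons a s ha ih =>
    rw [Finset.prod_cons, Finset.prod_cons, Real.sqrt_mul (h a (Finset.mem_cons_self a s)),
      ih (fun i hi => h i (Finset.mem_cons_of_mem hi))]

lemma min_le_sqrt_mul {a b : ℝ} (ha : 0 ≤ a) (hb : 0 ≤ b) : min a b ≤ Real.sqrt (a * b) := by
  rcases le_total a b with h | h
  · rw [min_eq_left h]
    calc a = Real.sqrt (a * a) := (Real.sqrt_mul_self ha).symm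
    _ ≤ Real.sqrt (a * b) := Real.sqrt_le_sqrt (by nlinarith)
  · rw [min_eq_right h]
    calc b = Real.sqrt (b * b) := (Real.sqrt_mul_self hb).symm
    _ ≤ Real.sqrt (a * b) := Real.sqrt_le_sqrt (by nlinarith)

/-- existence of a test `φ` with
`w_θ P_θ φ + w_η P_η (1−φ) ≤ √(w_θ w_η) ρ(p,q)^{|D_1|+|D_2|}`. -/
theorem stmt4 (n : ℕ) (hn : 2 ≤ n) (p q : ℝ) (hp : p ∈ Set.Ioo (0:ℝ) 1)
    (hq : q ∈ Set.Ioo (0:ℝ) 1) (θ η : Fin n → Bool)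
    (wθ wη : ℝ) (hwθ : 0 < wθ) (hwη : 0 < wη) :
    ∃ φ : ObsGraph n → ℝ, (∀ x, φ x ∈ Set.Icc (0:ℝ) 1) ∧
      wθ * (∑ x : ObsGraph n, graphPMF p q θ x * φ x)
        + wη * (∑ x : ObsGraph n, graphPMF p q η x * (1 - φ x))
      ≤ Real.sqrt wθ * Real.sqrt wη * rho p q ^ ((D1 θ η).card + (D2 θ η).card) := by
  classical
  obtain ⟨hp0, hp1⟩ := hp
  obtain ⟨hq0, hq1⟩ := hq
  -- basic nonnegativity facts
  have hQ : ∀ (ζ : Fin n → Bool) (e : Edge n), 0 ≤ edgeProb p q ζ e ∧ edgeProb p q ζ e ≤ 1 := by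
    intro ζ e
    unfold edgeProb
    split <;> constructor <;> linarith
  have hpmf : ∀ (ζ : Fin n → Bool) (x : ObsGraph n), 0 ≤ graphPMF p q ζ x := by
    intro ζ x
    apply Finset.prod_nonneg
    intro e _
    rcases hQ ζ e with ⟨h0, h1⟩
    split <;> linarith
  -- the test
  refine ⟨fun x => if wθ * graphPMF p q θ x ≤ wη * graphPMF p q η x then 1 else 0, ?_, ?_⟩
  · intro x; dsimp only; split <;> constructor <;> norm_num
  -- rewrite LHS as a sum of minima
  have hmin : wθ * (∑ x : ObsGraph n, graphPMF p q θ x *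
        (if wθ * graphPMF p q θ x ≤ wη * graphPMF p q η x then (1:ℝ) else 0))
      + wη * (∑ x : ObsGraph n, graphPMF p q η x *
        (1 - if wθ * graphPMF p q θ x ≤ wη * graphPMF p q η x then (1:ℝ) else 0))
      = ∑ x : ObsGraph n, min (wθ * graphPMF p q θ x) (wη * graphPMF p q η x) := by
    rw [Finset.mul_sum, Finset.mul_sum, ← Finset.sum_add_distrib]
    refine Finset.sum_congr rfl fun x _ => ?_
    rw [min_def]
    split <;> ring
  rw [hmin]
  -- bound each minimum by the geometric mean
  have hstep : ∑ x : ObsGraph n, min (wθ * graphPMF p q θ x) (wη * graphPMF p q η x)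
      ≤ Real.sqrt wθ * Real.sqrt wη *
        ∑ x : ObsGraph n, Real.sqrt (graphPMF p q θ x * graphPMF p q η x) := by
    rw [Finset.mul_sum]
    refine Finset.sum_le_sum fun x _ => ?_
    calc min (wθ * graphPMF p q θ x) (wη * graphPMF p q η x)
        ≤ Real.sqrt ((wθ * graphPMF p q θ x) * (wη * graphPMF p q η x)) :=
          min_le_sqrt_mul (mul_nonneg hwθ.le (hpmf _ _)) (mul_nonneg hwη.le (hpmf _ _))
      _ = Real.sqrt wθ * Real.sqrt wη * Real.sqrt (graphPMF p q θ x * graphPMF p q η x) := by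
          rw [show (wθ * graphPMF p q θ x) * (wη * graphPMF p q η x)
              = wθ * (wη * (graphPMF p q θ x * graphPMF p q η x)) by ring,
            Real.sqrt_mul hwθ.le, Real.sqrt_mul hwη.le]; ring
  refine hstep.trans ?_
  refine mul_le_mul_of_nonneg_left ?_ (by positivity)
  -- it remains: Hellinger affinity equals rho ^ (|D1|+|D2|)
  have key : ∑ x : ObsGraph n, Real.sqrt (graphPMF p q θ x * graphPMF p q η x)
      = rho p q ^ ((D1 θ η).card + (D2 θ η).card) := by
    have hterm : ∀ x : ObsGraph n, Real.sqrt (graphPMF p q θ x * graphPMF p q η x)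
        = ∏ e : Edge n, (if x e
            then Real.sqrt (edgeProb p q θ e * edgeProb p q η e)
            else Real.sqrt ((1 - edgeProb p q θ e) * (1 - edgeProb p q η e))) := by
      intro x
      unfold graphPMF
      rw [← Finset.prod_mul_distrib, sqrt_finset_prod]
      · refine Finset.prod_congr rfl fun e _ => ?_
        by_cases hxe : x e <;> simp [hxe]
      · intro e _
        rcases hQ θ e with ⟨h0, h1⟩
        rcases hQ η e with ⟨h0', h1'⟩
        split
        · exact mul_nonneg h0 h0'
        · exact mul_nonneg (by linarith) (by linarith)
    simp only [hterm]
    have hswap : ∑ x : ObsGraph n, ∏ e : Edge n, (if x e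
            then Real.sqrt (edgeProb p q θ e * edgeProb p q η e)
            else Real.sqrt ((1 - edgeProb p q θ e) * (1 - edgeProb p q η e)))
        = ∏ e : Edge n, ∑ b : Bool, (if b
            then Real.sqrt (edgeProb p q θ e * edgeProb p q η e)
            else Real.sqrt ((1 - edgeProb p q θ e) * (1 - edgeProb p q η e))) := by
      rw [Fintype.prod_sum]
    rw [hswap]
    have hfac : ∀ e : Edge n, (∑ b : Bool, (if b
            then Real.sqrt (edgeProb p q θ e * edgeProb p q η e)
            else Real.sqrt ((1 - edgeProb p q θ e) * (1 - edgeProb p q η e))))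
        = if ((θ e.val.1 = θ e.val.2) ↔ ¬(η e.val.1 = η e.val.2)) then rho p q else 1 := by
      intro e
      rw [Fintype.sum_bool, if_pos (rfl : true = true),
        if_neg (by simp : ¬(false = true))]
      by_cases h1 : θ e.val.1 = θ e.val.2 <;> by_cases h2 : η e.val.1 = η e.val.2
      · rw [if_neg (fun h => (h.mp h1) h2)]
        simp only [edgeProb, if_pos h1, if_pos h2]
        rw [Real.sqrt_mul_self hp0.le, Real.sqrt_mul_self (by linarith : (0:ℝ) ≤ 1 - p)]
        ring
      · rw [if_pos ⟨fun _ => h2, fun _ => h1⟩]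
        simp only [edgeProb, if_pos h1, if_neg h2, rho]
      · rw [if_pos ⟨fun h => absurd h h1, fun h => absurd h2 h⟩]
        simp only [edgeProb, if_neg h1, if_pos h2, rho]
        rw [mul_comm q p, mul_comm (1-q) (1-p)]
      · rw [if_neg (fun h => h1 (h.mpr h2))]
        simp only [edgeProb, if_neg h1, if_neg h2]
        rw [Real.sqrt_mul_self hq0.le, Real.sqrt_mul_self (by linarith : (0:ℝ) ≤ 1 - q)]
        ring
    rw [Finset.prod_congr rfl (fun e _ => hfac e), Finset.prod_ite,
      Finset.prod_const, Finset.prod_const, one_pow, mul_one]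
    congr 1
    -- card of edges where community relation flips = |D1| + |D2|
    have hD : Disjoint (D1 θ η) (D2 θ η) := by
      rw [Finset.disjoint_left]
      intro a ha hb
      simp only [D1, D2, Finset.mem_filter, Finset.mem_univ, true_and] at ha hb
      exact ha.2.2 hb.2.2
    rw [← Finset.card_union_of_disjoint hD]
    apply Finset.card_bij (fun (e : Edge n) _ => e.val)
    · intro e he
      simp only [Finset.mem_filter, Finset.mem_univ, true_and] at he
      simp only [D1, D2, Finset.mem_union, Finset.mem_filter, Finset.mem_univ, true_and]
      rcases e with ⟨⟨a, b⟩, hab⟩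
      by_cases h1 : θ a = θ b
      · exact Or.inl ⟨hab, h1, he.mp h1⟩
      · refine Or.inr ⟨hab, h1, ?_⟩
        by_contra h2
        exact h1 (he.mpr h2)
    · intro e1 h1 e2 h2 hv
      exact Subtype.ext hv
    · intro a ha
      simp only [D1, D2, Finset.mem_union, Finset.mem_filter, Finset.mem_univ, true_and] at ha
      have hab : a.1 < a.2 := by rcases ha with ⟨h, -⟩ | ⟨h, -⟩ <;> exact h
      refine ⟨⟨a, hab⟩, ?_, rfl⟩
      simp only [Finset.mem_filter, Finset.mem_univ, true_and]
      rcases ha with ⟨-, h1, h2⟩ | ⟨-, h1, h2⟩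
      · exact ⟨fun _ => h2, fun _ => h1⟩
      · exact ⟨fun h => absurd h h1, fun h => absurd h2 h⟩
  rw [key]
end

section
/- Let n ≥ 2, p, q ∈ (0,1), let the prior on Θ_n be uniform, and fix θ ∈ Θ_n. Then the expected posterior mass of the true assignment satisfies P_θ Π({θ} | X^n) ≥ 1 − (n/2)·ρ(p,q)^{n/2}·exp(n·ρ(p,q)^{n/2}). -/
open Finset Real Filter

/- ========================= Auxiliary lemmas ========================= -/

lemma sqrt_prod {α : Type*} (s : Finset α) (f : α → ℝ) (h : ∀ i ∈ s, 0 ≤ f i) :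
    Real.sqrt (∏ i ∈ s, f i) = ∏ i ∈ s, Real.sqrt (f i) := by
  classical
  induction s using Finset.cons_induction with
  | empty => simp
  | cons a s ha ih =>
    rw [Finset.prod_cons, Finset.prod_cons, Real.sqrt_mul (h a (Finset.mem_cons_self a s)),
      ih (fun i hi => h i (Finset.mem_cons_of_mem hi))]

lemma edgeProb_mem {n : ℕ} {p q : ℝ} (hp : p ∈ Set.Ioo (0:ℝ) 1) (hq : q ∈ Set.Ioo (0:ℝ) 1)
    (θ : Fin n → Bool) (e : Edge n) : edgeProb p q θ e ∈ Set.Ioo (0:ℝ) 1 := by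
  unfold edgeProb; split <;> assumption

lemma graphPMF_pos {n : ℕ} {p q : ℝ} (hp : p ∈ Set.Ioo (0:ℝ) 1) (hq : q ∈ Set.Ioo (0:ℝ) 1)
    (θ : Fin n → Bool) (x : ObsGraph n) : 0 < graphPMF p q θ x := by
  apply Finset.prod_pos
  intro e _
  obtain ⟨h1, h2⟩ := edgeProb_mem hp hq θ e
  split <;> linarith

lemma sum_graphPMF {n : ℕ} (p q : ℝ) (θ : Fin n → Bool) :
    ∑ x : ObsGraph n, graphPMF p q θ x = 1 := by
  unfold graphPMF
  rw [← Fintype.piFinset_univ, ← Finset.prod_univ_sum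
    (f := fun (e : Edge n) (b : Bool) => if b then edgeProb p q θ e else 1 - edgeProb p q θ e)]
  rw [Finset.prod_eq_one]
  intro e _
  simp [Fintype.sum_bool]

lemma hellinger {n : ℕ} {p q : ℝ} (hp : p ∈ Set.Ioo (0:ℝ) 1) (hq : q ∈ Set.Ioo (0:ℝ) 1)
    (θ η : Fin n → Bool) :
    ∑ x : ObsGraph n, Real.sqrt (graphPMF p q θ x * graphPMF p q η x)
      = rho p q ^ (Finset.univ.filter fun e : Edge n =>
          ¬((θ e.1.1 = θ e.1.2) ↔ (η e.1.1 = η e.1.2))).card := by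
  classical
  have key : ∀ x : ObsGraph n, Real.sqrt (graphPMF p q θ x * graphPMF p q η x)
      = ∏ e : Edge n, Real.sqrt ((if x e then edgeProb p q θ e else 1 - edgeProb p q θ e)
          * (if x e then edgeProb p q η e else 1 - edgeProb p q η e)) := by
    intro x
    rw [graphPMF, graphPMF, ← Finset.prod_mul_distrib]
    apply _root_.sqrt_prod
    intro e _
    obtain ⟨h1, h2⟩ := edgeProb_mem hp hq θ e
    obtain ⟨h3, h4⟩ := edgeProb_mem hp hq η e
    split <;> nlinarith
  simp_rw [key]
  rw [← Fintype.piFinset_univ, ← Finset.prod_univ_sum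
    (f := fun (e : Edge n) (b : Bool) => Real.sqrt ((if b then edgeProb p q θ e else 1 - edgeProb p q θ e)
          * (if b then edgeProb p q η e else 1 - edgeProb p q η e)))]
  have factor : ∀ e : Edge n,
      (∑ b : Bool, Real.sqrt ((if b then edgeProb p q θ e else 1 - edgeProb p q θ e)
          * (if b then edgeProb p q η e else 1 - edgeProb p q η e)))
      = if ((θ e.1.1 = θ e.1.2) ↔ (η e.1.1 = η e.1.2)) then 1 else rho p q := by
    intro e
    rw [Fintype.sum_bool]
    simp only [if_true, if_false]
    unfold edgeProb rho
    by_cases h1 : θ e.1.1 = θ e.1.2 <;> by_cases h2 : η e.1.1 = η e.1.2 <;>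
      simp only [h1, h2, if_true, if_false, iff_true, iff_false, not_true, not_false_iff,
        if_neg, if_pos, Bool.false_eq_true, Bool.true_eq_false]
    all_goals first
      | (rw [Real.sqrt_mul_self hp.1.le,
          Real.sqrt_mul_self (show (0:ℝ) ≤ 1 - p by linarith [hp.2])]; ring)
      | (rw [Real.sqrt_mul_self hq.1.le,
          Real.sqrt_mul_self (show (0:ℝ) ≤ 1 - q by linarith [hq.2])]; ring)
      | ring_nf
  simp_rw [factor]
  rw [Finset.prod_ite]
  simp [Finset.prod_const]

/-- The set of coordinates where two assignments differ. -/
def dset {n : ℕ} (θ η : Fin n → Bool) : Finset (Fin n) := Finset.univ.filter fun i => θ i ≠ η i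

lemma flip_edge1 {n : ℕ} {θ η : Fin n → Bool} {a b : Fin n} (h1 : θ a ≠ η a) (h2 : θ b = η b) :
    ¬((θ a = θ b) ↔ (η a = η b)) := by
  cases hθa : θ a <;> cases hηa : η a <;> cases hθb : θ b <;> simp_all

lemma flip_edge2 {n : ℕ} {θ η : Fin n → Bool} {a b : Fin n} (h1 : θ a = η a) (h2 : θ b ≠ η b) :
    ¬((θ a = θ b) ↔ (η a = η b)) := by
  cases hθa : θ a <;> cases hηa : η b <;> cases hθb : θ b <;> simp_all

lemma card_Ediff {n : ℕ} (θ η : Fin n → Bool) (e0 : Edge n) :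
    (dset θ η).card * ((dset θ η)ᶜ).card
      ≤ (Finset.univ.filter fun e : Edge n =>
          ¬((θ e.1.1 = θ e.1.2) ↔ (η e.1.1 = η e.1.2))).card := by
  classical
  rw [← Finset.card_product]
  apply Finset.card_le_card_of_injOn
    (fun pr => if h : pr.1 < pr.2 then ⟨pr, h⟩ else
      if h' : pr.2 < pr.1 then ⟨(pr.2, pr.1), h'⟩ else e0)
  · intro pr hpr
    simp only [Finset.mem_coe] at hpr ⊢
    rw [Finset.mem_product] at hpr
    obtain ⟨hp1, hp2⟩ := hpr
    rw [dset, Finset.mem_filter] at hp1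
    rw [Finset.mem_compl, dset, Finset.mem_filter] at hp2
    have h1 : θ pr.1 ≠ η pr.1 := hp1.2
    have h2 : θ pr.2 = η pr.2 := by
      by_contra hc; exact hp2 ⟨Finset.mem_univ _, hc⟩
    have hne : pr.1 ≠ pr.2 := by
      intro hc; rw [hc] at h1; exact h1 h2
    rcases lt_or_gt_of_ne hne with h | h
    · rw [dif_pos h, Finset.mem_filter]
      exact ⟨Finset.mem_univ _, flip_edge1 h1 h2⟩
    · rw [dif_neg (not_lt_of_gt h), dif_pos h, Finset.mem_filter]
      exact ⟨Finset.mem_univ _, flip_edge2 h2 h1⟩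
  · intro pr hpr pr' hpr' heq
    dsimp only at heq
    rw [Finset.coe_product] at hpr hpr'
    obtain ⟨hp1, hp2⟩ := hpr
    obtain ⟨hp1', hp2'⟩ := hpr'
    simp only [Finset.coe_compl, Set.mem_compl_iff, Finset.mem_coe] at hp2 hp2'
    rw [Finset.mem_coe] at hp1 hp1'
    have hne : pr.1 ≠ pr.2 := by
      intro hc; rw [hc] at hp1; exact hp2 hp1
    have hne' : pr'.1 ≠ pr'.2 := by
      intro hc; rw [hc] at hp1'; exact hp2' hp1'
    rcases lt_or_gt_of_ne hne with h | h <;> rcases lt_or_gt_of_ne hne' with h' | h' <;>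
      [rw [dif_pos h, dif_pos h'] at heq;
       rw [dif_pos h, dif_neg (not_lt_of_gt h'), dif_pos h'] at heq;
       rw [dif_neg (not_lt_of_gt h), dif_pos h, dif_pos h'] at heq;
       rw [dif_neg (not_lt_of_gt h), dif_pos h, dif_neg (not_lt_of_gt h'), dif_pos h'] at heq] <;>
      simp only [Subtype.mk.injEq, Prod.ext_iff] at heq <;>
      obtain ⟨e1, e2⟩ := heq
    · exact Prod.ext e1 e2
    · exact absurd (e1 ▸ hp1) hp2'
    · exact absurd (e2 ▸ hp1) hp2'
    · exact Prod.ext e2 e1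

lemma countOnes_le {n : ℕ} (θ : Fin n → Bool) : countOnes θ ≤ n := by
  simpa [countOnes] using Finset.card_filter_le Finset.univ (fun i => θ i = true)

lemma countOnes_not {n : ℕ} (η : Fin n → Bool) : countOnes (fun i => !η i) = n - countOnes η := by
  unfold countOnes
  have h := Finset.card_filter_add_card_filter_not
    (s := (Finset.univ : Finset (Fin n))) (p := fun i => η i = true)
  have heq : (Finset.univ.filter fun i => (!η i) = true) =
      (Finset.univ.filter fun i => ¬(η i = true)) := by
    apply Finset.filter_congr; intro i _; simp
  rw [heq]
  simp only [Finset.card_univ, Fintype.card_fin] at h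
  omega

lemma not_both_Theta {n : ℕ} (hn : 1 ≤ n) {η : Fin n → Bool} (h1 : η ∈ Theta n)
    (h2 : (fun i => !η i) ∈ Theta n) : False := by
  simp only [Theta, Finset.mem_filter, Finset.mem_univ, true_and] at h1 h2
  have hc := countOnes_not η
  have hle := countOnes_le η
  have heq : 2 * countOnes η = n := by omega
  have e1 := h1.2 ⟨0, hn⟩ heq rfl
  have e2 := h2.2 ⟨0, hn⟩ (by omega) rfl
  rw [e1] at e2
  simp at e2

lemma eq_of_dset_eq {n : ℕ} {η1 η2 θ : Fin n → Bool} (h : dset η1 θ = dset η2 θ) : η1 = η2 := by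
  funext i
  have h2 := Finset.ext_iff.mp h i
  simp only [dset, Finset.mem_filter, Finset.mem_univ, true_and] at h2
  cases hθ : θ i <;> cases ha : η1 i <;> cases hb : η2 i <;> simp_all

lemma neg_of_dset_compl {n : ℕ} {η1 η2 θ : Fin n → Bool} (h : dset η1 θ = (dset η2 θ)ᶜ) :
    η2 = fun i => !η1 i := by
  funext i
  have h2 := Finset.ext_iff.mp h i
  simp only [dset, Finset.mem_compl, Finset.mem_filter, Finset.mem_univ, true_and] at h2
  cases hθ : θ i <;> cases ha : η1 i <;> cases hb : η2 i <;> simp_all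

lemma rho_pos {p q : ℝ} (hp : p ∈ Set.Ioo (0:ℝ) 1) (hq : q ∈ Set.Ioo (0:ℝ) 1) : 0 < rho p q := by
  have := Real.sqrt_pos.mpr (mul_pos hp.1 hq.1)
  have := Real.sqrt_nonneg ((1-p)*(1-q))
  unfold rho; linarith

lemma rho_le_one {p q : ℝ} (hp : p ∈ Set.Ioo (0:ℝ) 1) (hq : q ∈ Set.Ioo (0:ℝ) 1) :
    rho p q ≤ 1 := by
  obtain ⟨hp0, hp1⟩ := hp
  obtain ⟨hq0, hq1⟩ := hq
  unfold rho
  rw [Real.sqrt_mul hp0.le, Real.sqrt_mul (by linarith : (0:ℝ) ≤ 1 - p)]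
  nlinarith [sq_nonneg (Real.sqrt p * Real.sqrt (1-q) - Real.sqrt q * Real.sqrt (1-p)),
    Real.sq_sqrt hp0.le, Real.sq_sqrt hq0.le,
    Real.sq_sqrt (by linarith : (0:ℝ) ≤ 1 - p), Real.sq_sqrt (by linarith : (0:ℝ) ≤ 1 - q),
    Real.sqrt_nonneg p, Real.sqrt_nonneg q, Real.sqrt_nonneg (1-p), Real.sqrt_nonneg (1-q),
    sq_nonneg (Real.sqrt p * Real.sqrt q + Real.sqrt (1-p) * Real.sqrt (1-q)),
    mul_nonneg (mul_nonneg (Real.sqrt_nonneg p) (Real.sqrt_nonneg q))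
      (mul_nonneg (Real.sqrt_nonneg (1-p)) (Real.sqrt_nonneg (1-q)))]

lemma exp_bd {y : ℝ} : Real.exp y - 1 ≤ y * Real.exp y := by
  have h1 : 1 - y ≤ Real.exp (-y) := by linarith [Real.add_one_le_exp (-y)]
  have h2 : Real.exp y * Real.exp (-y) = 1 := by rw [← Real.exp_add]; simp
  nlinarith [Real.exp_pos y, mul_le_mul_of_nonneg_left h1 (Real.exp_pos y).le]

lemma powerset_sum (n : ℕ) (x : ℝ) :
    ∑ S ∈ (Finset.univ : Finset (Fin n)).powerset, x ^ S.card = (x + 1) ^ n := by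
  have h := Finset.prod_add (fun _ : Fin n => x) (fun _ => 1) Finset.univ
  simp only [Finset.prod_const, Finset.prod_const_one, one_pow, mul_one, Finset.card_univ,
    Fintype.card_fin] at h
  exact h.symm

lemma amgm_div {a b : ℝ} (ha : 0 < a) (hb : 0 < b) : a*b/(a+b) ≤ Real.sqrt (a*b)/2 := by
  rw [div_le_div_iff₀ (by linarith) (by norm_num), Real.sqrt_mul ha.le]
  nlinarith [mul_nonneg (mul_nonneg (Real.sqrt_nonneg a) (Real.sqrt_nonneg b))
      (sq_nonneg (Real.sqrt a - Real.sqrt b)), Real.sq_sqrt ha.le, Real.sq_sqrt hb.le]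

/-- The map `η ↦` smaller of the difference set with `θ` / its complement. -/
def Fmap {n : ℕ} (θ η : Fin n → Bool) : Finset (Fin n) :=
  if 2 * (dset η θ).card ≤ n then dset η θ else (dset η θ)ᶜ

lemma dset_comm {n : ℕ} (θ η : Fin n → Bool) : dset θ η = dset η θ := by
  simp [dset, ne_comm]

lemma dset_self {n : ℕ} (θ : Fin n → Bool) : dset θ θ = ∅ := by
  simp [dset]

/-- Step A: expected posterior ≥ 1 - sum of halved Hellinger affinities. -/
lemma stepA {n : ℕ} {p q : ℝ} (hp : p ∈ Set.Ioo (0:ℝ) 1) (hq : q ∈ Set.Ioo (0:ℝ) 1)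
    {θ : Fin n → Bool} (hθ : θ ∈ Theta n) (c : ℝ) (hc : 0 < c) :
    1 - ∑ η ∈ (Theta n).erase θ,
        (∑ x : ObsGraph n, Real.sqrt (graphPMF p q θ x * graphPMF p q η x)) / 2
      ≤ expPostMass p q (fun _ => c) θ {θ} := by
  classical
  have hDpos : ∀ x : ObsGraph n, 0 < ∑ η ∈ Theta n, c * graphPMF p q η x := fun x =>
    Finset.sum_pos (fun η _ => mul_pos hc (graphPMF_pos hp hq η x)) ⟨θ, hθ⟩
  have hterm : ∀ x : ObsGraph n, graphPMF p q θ x * postMass p q (fun _ => c) {θ} x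
      = graphPMF p q θ x - ∑ η ∈ (Theta n).erase θ,
          graphPMF p q θ x * (c * graphPMF p q η x) / (∑ η' ∈ Theta n, c * graphPMF p q η' x) := by
    intro x
    have hD := (hDpos x).ne'
    have hsum : c * graphPMF p q θ x + ∑ η ∈ (Theta n).erase θ, c * graphPMF p q η x
        = ∑ η ∈ Theta n, c * graphPMF p q η x :=
      Finset.add_sum_erase _ (fun η => c * graphPMF p q η x) hθ
    rw [postMass, Finset.sum_singleton]
    have h2 : ∑ η ∈ (Theta n).erase θ, graphPMF p q θ x * (c * graphPMF p q η x)
          / (∑ η' ∈ Theta n, c * graphPMF p q η' x)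
        = graphPMF p q θ x * ((∑ η' ∈ Theta n, c * graphPMF p q η' x) - c * graphPMF p q θ x)
          / (∑ η' ∈ Theta n, c * graphPMF p q η' x) := by
      rw [← Finset.sum_div, ← Finset.mul_sum]
      congr 2
      linarith [hsum]
    rw [h2]
    field_simp
    ring
  have hE : expPostMass p q (fun _ => c) θ {θ}
      = 1 - ∑ x : ObsGraph n, ∑ η ∈ (Theta n).erase θ, graphPMF p q θ x * (c * graphPMF p q η x)
          / (∑ η' ∈ Theta n, c * graphPMF p q η' x) := by
    rw [expPostMass, Finset.sum_congr rfl (fun x _ => hterm x), Finset.sum_sub_distrib,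
      sum_graphPMF]
  rw [hE]
  have hb : ∑ x : ObsGraph n, ∑ η ∈ (Theta n).erase θ, graphPMF p q θ x * (c * graphPMF p q η x)
        / (∑ η' ∈ Theta n, c * graphPMF p q η' x)
      ≤ ∑ η ∈ (Theta n).erase θ,
        (∑ x : ObsGraph n, Real.sqrt (graphPMF p q θ x * graphPMF p q η x)) / 2 := by
    rw [Finset.sum_comm]
    apply Finset.sum_le_sum
    intro η hη
    rw [Finset.sum_div]
    apply Finset.sum_le_sum
    intro x _
    have ha := graphPMF_pos hp hq θ x
    have hb' := graphPMF_pos hp hq η x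
    have hge : c * graphPMF p q θ x + c * graphPMF p q η x
        ≤ ∑ η' ∈ Theta n, c * graphPMF p q η' x := by
      rw [← Finset.add_sum_erase _ (fun η => c * graphPMF p q η x) hθ]
      have hs : c * graphPMF p q η x ≤ ∑ η'' ∈ (Theta n).erase θ, c * graphPMF p q η'' x :=
        Finset.single_le_sum (fun i _ => (mul_pos hc (graphPMF_pos hp hq i x)).le) hη
      linarith
    calc graphPMF p q θ x * (c * graphPMF p q η x) / (∑ η' ∈ Theta n, c * graphPMF p q η' x)
        ≤ graphPMF p q θ x * (c * graphPMF p q η x) / (c * graphPMF p q θ x + c * graphPMF p q η x) := by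
          gcongr
      _ = graphPMF p q θ x * graphPMF p q η x / (graphPMF p q θ x + graphPMF p q η x) := by
          have hab : (0:ℝ) < graphPMF p q θ x + graphPMF p q η x := by linarith
          field_simp
      _ ≤ Real.sqrt (graphPMF p q θ x * graphPMF p q η x) / 2 := amgm_div ha hb'
  linarith

/-- Step: exponent comparison for `Fmap`. -/
lemma Fmap_exp {n : ℕ} (θ η : Fin n → Bool) :
    ((n:ℝ)/2) * (Fmap θ η).card ≤ ((dset θ η).card * ((dset θ η)ᶜ).card : ℕ) := by
  have hdn : (dset θ η).card ≤ n := by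
    simpa using Finset.card_le_univ (dset θ η)
  have hcompl : ((dset θ η)ᶜ).card = n - (dset θ η).card := by
    rw [Finset.card_compl]; simp
  rw [Fmap, dset_comm η θ, hcompl]
  have hd0 : (0:ℝ) ≤ ((dset θ η).card : ℝ) := Nat.cast_nonneg _
  have hdnr : ((dset θ η).card : ℝ) ≤ n := Nat.cast_le.mpr hdn
  split
  · rename_i hcase
    push_cast [Nat.cast_sub hdn]
    have hc2 : 2 * ((dset θ η).card : ℝ) ≤ n := by exact_mod_cast hcase
    nlinarith [mul_nonneg hd0 (by linarith : (0:ℝ) ≤ (n:ℝ) - 2 * ((dset θ η).card : ℝ))]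
  · rename_i hcase
    rw [hcompl]
    push_cast [Nat.cast_sub hdn]
    have hc2 : (n:ℝ) < 2 * ((dset θ η).card : ℝ) := by exact_mod_cast Nat.lt_of_not_le hcase
    nlinarith [mul_nonneg (by linarith : (0:ℝ) ≤ ((dset θ η).card : ℝ) - (n:ℝ)/2)
      (by linarith : (0:ℝ) ≤ (n:ℝ) - ((dset θ η).card : ℝ))]

lemma Fmap_ne_empty {n : ℕ} (hn : 1 ≤ n) {θ η : Fin n → Bool} (hθ : θ ∈ Theta n)
    (hη : η ∈ Theta n) (hne : η ≠ θ) : Fmap θ η ≠ ∅ := by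
  rw [Fmap]
  split
  · intro h0
    exact hne (eq_of_dset_eq (h0.trans (dset_self θ).symm))
  · intro h0
    rw [Finset.compl_eq_empty_iff] at h0
    have hθη : θ = fun i => !η i := by
      funext i
      have hi : i ∈ dset η θ := h0 ▸ Finset.mem_univ i
      rw [dset, Finset.mem_filter] at hi
      have := hi.2
      cases hηi : η i <;> cases hθi : θ i <;> simp_all
    exact absurd (hθη ▸ hθ) (fun h => not_both_Theta hn hη h)

lemma Fmap_injOn {n : ℕ} (hn : 1 ≤ n) {θ : Fin n → Bool} :
    ∀ η1 ∈ (Theta n).erase θ, ∀ η2 ∈ (Theta n).erase θ, Fmap θ η1 = Fmap θ η2 → η1 = η2 := by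
  intro η1 h1 η2 h2 hFeq
  have hT1 : η1 ∈ Theta n := (Finset.mem_erase.mp h1).2
  have hT2 : η2 ∈ Theta n := (Finset.mem_erase.mp h2).2
  rw [Fmap, Fmap] at hFeq
  split at hFeq <;> split at hFeq
  · exact eq_of_dset_eq hFeq
  · have := neg_of_dset_compl hFeq
    exact absurd (this ▸ hT2) (fun h => (not_both_Theta hn hT1 h).elim)
  · have := neg_of_dset_compl hFeq.symm
    exact absurd (this ▸ hT1) (fun h => (not_both_Theta hn hT2 h).elim)
  · exact eq_of_dset_eq (compl_inj_iff.mp hFeq)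

/-- `P_θ Π({θ} | X^n) ≥ 1 − (n/2) ρ(p,q)^{n/2} exp(n ρ(p,q)^{n/2})`
for the uniform prior. -/
theorem stmt6 (n : ℕ) (hn : 2 ≤ n) (p q : ℝ) (hp : p ∈ Set.Ioo (0:ℝ) 1)
    (hq : q ∈ Set.Ioo (0:ℝ) 1) (θ : Fin n → Bool) (hθ : θ ∈ Theta n) :
    1 - ((n : ℝ) / 2) * rho p q ^ ((n : ℝ) / 2)
        * Real.exp ((n : ℝ) * rho p q ^ ((n : ℝ) / 2))
      ≤ expPostMass p q (unifPrior n) θ {θ} := by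
  classical
  have hn1 : 1 ≤ n := by omega
  have hrho0 := rho_pos hp hq
  have hrho1 := rho_le_one hp hq
  set X := rho p q ^ ((n:ℝ)/2) with hXdef
  have hX0 : (0:ℝ) ≤ X := Real.rpow_nonneg hrho0.le _
  have e0 : Edge n := ⟨(⟨0, by omega⟩, ⟨1, by omega⟩), by
    simp only [Fin.mk_lt_mk]; omega⟩
  -- per-η affinity bound
  have haff : ∀ η ∈ (Theta n).erase θ,
      ∑ x : ObsGraph n, Real.sqrt (graphPMF p q θ x * graphPMF p q η x)
        ≤ X ^ (Fmap θ η).card := by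
    intro η hη
    rw [hellinger hp hq θ η]
    have hcard := card_Ediff θ η e0
    have hexp : ((n:ℝ)/2) * (Fmap θ η).card
        ≤ ((Finset.univ.filter fun e : Edge n =>
            ¬((θ e.1.1 = θ e.1.2) ↔ (η e.1.1 = η e.1.2))).card : ℝ) := by
      refine le_trans (Fmap_exp θ η) ?_
      exact_mod_cast hcard
    calc rho p q ^ (Finset.univ.filter fun e : Edge n =>
            ¬((θ e.1.1 = θ e.1.2) ↔ (η e.1.1 = η e.1.2))).card
        = rho p q ^ (((Finset.univ.filter fun e : Edge n =>
            ¬((θ e.1.1 = θ e.1.2) ↔ (η e.1.1 = η e.1.2))).card : ℕ) : ℝ) := by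
          rw [Real.rpow_natCast]
      _ ≤ rho p q ^ (((n:ℝ)/2) * (Fmap θ η).card) :=
          Real.rpow_le_rpow_of_exponent_ge hrho0 hrho1 hexp
      _ = X ^ (Fmap θ η).card := by
          rw [hXdef, ← Real.rpow_natCast (rho p q ^ ((n:ℝ)/2)) (Fmap θ η).card,
            ← Real.rpow_mul hrho0.le]
  -- sum over η bound
  have hsumF : ∑ η ∈ (Theta n).erase θ, X ^ (Fmap θ η).card ≤ (X+1)^n - 1 := by
    have himg : ∑ S ∈ ((Theta n).erase θ).image (Fmap θ), X ^ S.card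
        = ∑ η ∈ (Theta n).erase θ, X ^ (Fmap θ η).card :=
      Finset.sum_image (Fmap_injOn hn1)
    rw [← himg]
    have hsub : ((Theta n).erase θ).image (Fmap θ)
        ⊆ ((Finset.univ : Finset (Fin n)).powerset).erase ∅ := by
      intro S hS
      rw [Finset.mem_image] at hS
      obtain ⟨η, hη, rfl⟩ := hS
      rw [Finset.mem_erase]
      refine ⟨Fmap_ne_empty hn1 hθ (Finset.mem_erase.mp hη).2 (Finset.mem_erase.mp hη).1, ?_⟩
      exact Finset.mem_powerset.mpr (Finset.subset_univ _)
    calc ∑ S ∈ ((Theta n).erase θ).image (Fmap θ), X ^ S.card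
        ≤ ∑ S ∈ ((Finset.univ : Finset (Fin n)).powerset).erase ∅, X ^ S.card :=
          Finset.sum_le_sum_of_subset_of_nonneg hsub (fun S _ _ => by positivity)
      _ = (X+1)^n - 1 := by
          have h := Finset.add_sum_erase _ (fun S : Finset (Fin n) => X ^ S.card)
            (Finset.empty_mem_powerset (Finset.univ : Finset (Fin n)))
          rw [powerset_sum] at h
          simp only [Finset.card_empty, pow_zero] at h
          linarith
  -- exp bound
  have hfin : (X+1)^n - 1 ≤ (n:ℝ) * X * Real.exp ((n:ℝ) * X) := by
    have h1 : (X+1)^n ≤ Real.exp ((n:ℝ) * X) := by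
      have h2 : (X+1)^n ≤ (Real.exp X)^n := by
        apply pow_le_pow_left₀ (by positivity)
        linarith [Real.add_one_le_exp X]
      rw [← Real.exp_nat_mul] at h2
      exact_mod_cast h2
    have h3 := exp_bd (y := (n:ℝ) * X)
    linarith
  -- combine with step A
  have hA := stepA hp hq hθ (((2:ℝ) ^ (n-1))⁻¹) (by positivity)
  have hAB : ∑ η ∈ (Theta n).erase θ,
      (∑ x : ObsGraph n, Real.sqrt (graphPMF p q θ x * graphPMF p q η x)) / 2
      ≤ ((X+1)^n - 1) / 2 := by
    calc ∑ η ∈ (Theta n).erase θ,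
        (∑ x : ObsGraph n, Real.sqrt (graphPMF p q θ x * graphPMF p q η x)) / 2
        ≤ ∑ η ∈ (Theta n).erase θ, X ^ (Fmap θ η).card / 2 := by
          apply Finset.sum_le_sum
          intro η hη
          gcongr
          exact haff η hη
      _ = (∑ η ∈ (Theta n).erase θ, X ^ (Fmap θ η).card) / 2 := by rw [Finset.sum_div]
      _ ≤ ((X+1)^n - 1) / 2 := by linarith
  have hEeq : expPostMass p q (unifPrior n) θ {θ}
      = expPostMass p q (fun _ => ((2:ℝ) ^ (n-1))⁻¹) θ {θ} := rfl
  rw [hEeq]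
  have : 1 - ((n : ℝ) / 2) * X * Real.exp ((n : ℝ) * X)
      ≤ 1 - ∑ η ∈ (Theta n).erase θ,
        (∑ x : ObsGraph n, Real.sqrt (graphPMF p q θ x * graphPMF p q η x)) / 2 := by
    have : ((X+1)^n - 1)/2 ≤ ((n : ℝ) / 2) * X * Real.exp ((n : ℝ) * X) := by linarith
    linarith [hAB]
  linarith [hA]
end
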